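/- Let L : [0,∞) → [0,∞) be a strictly increasing continuous function, slowly varying at +∞, with L(0) = 0 and lim_{x→∞} L(x) = +∞, and let L⁻ denote its inverse. Then for all 0 < a < b, lim_{t→∞} L⁻(ta)/L⁻(tb) = 0. -/
import Mathlib


open Filter Set Topology

/-- If `L` is a strictly increasing continuous slowly varying function on `[0,∞)` with
`L 0 = 0` and `L(∞) = ∞`, and `Linv` is its inverse, then `Linv (t*a) / Linv (t*b) → 0`
as `t → ∞`, for all `0 < a < b`. -/
theorem stmt1 (L Linv : ℝ → ℝ)
    (hmono : StrictMonoOn L (Ici 0)) (hcont : ContinuousOn L (Ici 0))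
    (hL0 : L 0 = 0) (htop : Tendsto L atTop atTop)
    (hslow : ∀ c > (0:ℝ), Tendsto (fun x => L (c * x) / L x) atTop (𝓝 1))
    (hLnonneg : ∀ x ≥ 0, 0 ≤ L x) (hInvnonneg : ∀ y ≥ 0, 0 ≤ Linv y)
    (hinv₁ : ∀ x ≥ 0, Linv (L x) = x) (hinv₂ : ∀ y ≥ 0, L (Linv y) = y)
    (a b : ℝ) (ha : 0 < a) (hab : a < b) :
    Tendsto (fun t => Linv (t * a) / Linv (t * b)) atTop (𝓝 0) := by
  have hb : 0 < b := ha.trans hab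
  -- Linv is monotone on nonneg reals
  have hmonoInv : ∀ y₁ ≥ 0, ∀ y₂, y₁ ≤ y₂ → Linv y₁ ≤ Linv y₂ := by
    intro y₁ hy₁ y₂ h12
    by_contra h
    push_neg at h
    have h2 : (0:ℝ) ≤ y₂ := le_trans hy₁ h12
    have := hmono (hInvnonneg y₂ h2) (hInvnonneg y₁ hy₁) h
    rw [hinv₂ y₂ h2, hinv₂ y₁ hy₁] at this
    linarith
  have htb : Tendsto (fun t : ℝ => t * b) atTop atTop :=
    Tendsto.atTop_mul_const hb tendsto_id
  have hInvtop : Tendsto (fun t => Linv (t * b)) atTop atTop := by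
    rw [tendsto_atTop]
    intro M
    have hev : ∀ᶠ t in atTop, L (max M 0) ≤ t * b := htb.eventually_ge_atTop _
    filter_upwards [hev] with t ht
    calc M ≤ max M 0 := le_max_left _ _
      _ = Linv (L (max M 0)) := (hinv₁ _ (le_max_right _ _)).symm
      _ ≤ Linv (t * b) := hmonoInv _ (hLnonneg _ (le_max_right _ _)) _ ht
  rw [Metric.tendsto_nhds]
  intro ε hε
  have hε' : 0 < ε / 2 := by positivity
  have hratio : Tendsto (fun x => L ((ε / 2) * x) / L x) atTop (𝓝 1) := hslow _ hε'
  have hratio' : ∀ᶠ x in atTop, a / b < L ((ε / 2) * x) / L x :=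
    hratio.eventually (eventually_gt_nhds (by rw [div_lt_one hb]; exact hab))
  filter_upwards [hInvtop.eventually hratio', hInvtop.eventually_gt_atTop 0,
    eventually_gt_atTop (0:ℝ)] with t hrt hpos ht0
  have hta : 0 ≤ t * a := by positivity
  have htb' : 0 < t * b := by positivity
  have hLy : L (Linv (t * b)) = t * b := hinv₂ _ htb'.le
  rw [hLy] at hrt
  have h1 : t * a < L ((ε / 2) * Linv (t * b)) := by
    rw [div_lt_div_iff₀ hb htb'] at hrt
    nlinarith
  have h2 : Linv (t * a) ≤ (ε / 2) * Linv (t * b) := by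
    have hx : Linv (t * a) ∈ Ici (0:ℝ) := hInvnonneg _ hta
    have hy : (ε / 2) * Linv (t * b) ∈ Ici (0:ℝ) :=
      mul_nonneg hε'.le (hInvnonneg _ htb'.le)
    rw [← hmono.le_iff_le hx hy, hinv₂ _ hta]
    exact h1.le
  have h3 : Linv (t * a) / Linv (t * b) ≤ ε / 2 := by
    rw [div_le_iff₀ hpos]
    exact h2
  have h4 : 0 ≤ Linv (t * a) / Linv (t * b) :=
    div_nonneg (hInvnonneg _ hta) hpos.le
  rw [Real.dist_eq, sub_zero, abs_of_nonneg h4]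
  linarith
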